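/- arXiv:1808.10637 — 2 statements merged into one kernel-verified Lean document; each statement's English description precedes it below -/
import Mathlib

section
/- Let n ≥ 3 and p = (n+2)/(n−2). Then ∫_{ℝ^n} p U(y)^{p−1} Z_{n+1}(y) dy = −((n−2)/2) ∫_{ℝ^n} U(y)^p dy, where Z_{n+1}(y) = ((n−2)/2)U(y) + y·∇U(y); both integrals are finite. -/
open Set MeasureTheory Filter Topology Metric Bornology

noncomputable section

/-- The Laplacian of a scalar function on Euclidean `ℝⁿ`, as the sum of second
partial derivatives in the coordinate directions. -/
def lap {n : ℕ} (f : EuclideanSpace ℝ (Fin n) → ℝ) (x : EuclideanSpace ℝ (Fin n)) : ℝ :=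
  ∑ i : Fin n, fderiv ℝ (fun y => fderiv ℝ f y (EuclideanSpace.single i 1)) x
    (EuclideanSpace.single i 1)

/-- The standard Aubin–Talenti bubble `U(y) = α_n (1+|y|²)^{-(n-2)/2}` with
`α_n = (n(n-2))^{(n-2)/4}`. -/
def stdBubble (n : ℕ) (y : EuclideanSpace ℝ (Fin n)) : ℝ :=
  ((n : ℝ) * ((n : ℝ) - 2)) ^ (((n : ℝ) - 2) / 4) * (1 + ‖y‖ ^ 2) ^ (-(((n : ℝ) - 2) / 2))

/-- The kernel elements `Z_i(y) = ∂U/∂y_i`, `i = 1, …, n`. -/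
def kerZ (n : ℕ) (i : Fin n) (y : EuclideanSpace ℝ (Fin n)) : ℝ :=
  fderiv ℝ (stdBubble n) y (EuclideanSpace.single i 1)

/-- The kernel element `Z_{n+1}(y) = ((n-2)/2) U(y) + y·∇U(y)`. -/
def kerZlast (n : ℕ) (y : EuclideanSpace ℝ (Fin n)) : ℝ :=
  ((n : ℝ) - 2) / 2 * stdBubble n y + fderiv ℝ (stdBubble n) y y

/-! ### Auxiliary material for statement 7 -/

/-- The constant `α_n`. -/
def st7c (n : ℕ) : ℝ := ((n : ℝ) * ((n : ℝ) - 2)) ^ (((n : ℝ) - 2) / 4)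

/-- `α_n ^ p`. -/
def st7a (n : ℕ) : ℝ := st7c n ^ (((n : ℝ) + 2) / ((n : ℝ) - 2))

/-- The radial profile of `p U^{p-1} Z_{n+1} + ((n-2)/2) U^p`. -/
def st7H (n : ℕ) (r : ℝ) : ℝ :=
  st7a n * ((n : ℝ) - 2 * r ^ 2) * (1 + r ^ 2) ^ (-((n : ℝ) + 4) / 2)

/-- An antiderivative of `r ↦ r^(n-1) * st7H n r`. -/
def st7F (n : ℕ) (r : ℝ) : ℝ :=
  st7a n * (r ^ n * (1 + r ^ 2) ^ (-((n : ℝ) + 2) / 2))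

theorem st7c_pos (n : ℕ) (hn : 3 ≤ n) : 0 < st7c n := by
  have hn3 : (3:ℝ) ≤ (n:ℝ) := by exact_mod_cast hn
  apply Real.rpow_pos_of_pos; nlinarith

theorem st7a_pos (n : ℕ) (hn : 3 ≤ n) : 0 < st7a n :=
  Real.rpow_pos_of_pos (st7c_pos n hn) _

theorem st7_bubble_deriv (n : ℕ) (y : EuclideanSpace ℝ (Fin n)) :
    HasFDerivAt (stdBubble n)
      ((st7c n * (-(((n : ℝ) - 2) / 2) * (1 + ‖y‖ ^ 2) ^ (-(((n : ℝ) - 2) / 2) - 1))) •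
        (2 • (innerSL ℝ y))) y := by
  have hpos : (0:ℝ) < 1 + ‖y‖ ^ 2 := by positivity
  have h1 : HasFDerivAt (fun z : EuclideanSpace ℝ (Fin n) => (1:ℝ) + ‖z‖ ^ 2)
      (2 • (innerSL ℝ y)) y := by
    have := (hasFDerivAt_id y).norm_sq.const_add (1:ℝ)
    simpa using this
  have h2 : HasDerivAt (fun t : ℝ => t ^ (-(((n : ℝ) - 2) / 2)))
      ((-(((n : ℝ) - 2) / 2)) * (1 + ‖y‖ ^ 2) ^ (-(((n : ℝ) - 2) / 2) - 1)) (1 + ‖y‖ ^ 2) :=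
    Real.hasDerivAt_rpow_const (Or.inl hpos.ne')
  have h3 := (h2.comp_hasFDerivAt y h1).const_mul (st7c n)
  refine h3.congr_fderiv ?_
  rw [smul_smul]

theorem st7_kerZlast_eq (n : ℕ) (y : EuclideanSpace ℝ (Fin n)) :
    kerZlast n y = st7c n * (((n : ℝ) - 2) / 2) *
      (1 - ‖y‖ ^ 2) * (1 + ‖y‖ ^ 2) ^ (-(n : ℝ) / 2) := by
  have hpos : (0:ℝ) < 1 + ‖y‖ ^ 2 := by positivity
  have hfd := (st7_bubble_deriv n y).fderiv
  rw [kerZlast, hfd]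
  simp only [ContinuousLinearMap.smul_apply, smul_eq_mul, innerSL_apply_apply,
    real_inner_self_eq_norm_sq]
  rw [stdBubble, show ((n : ℝ) * ((n : ℝ) - 2)) ^ (((n : ℝ) - 2) / 4) = st7c n from rfl]
  have e1 : (-(((n : ℝ) - 2) / 2)) = (-(((n:ℝ)-2)/2) - 1) + 1 := by ring
  have e2 : (-(n : ℝ) / 2) = (-(((n:ℝ)-2)/2) - 1) := by ring
  rw [e1, e2, Real.rpow_add hpos, Real.rpow_one]
  ring

theorem st7_pow_eq (n : ℕ) (hn : 3 ≤ n) (y : EuclideanSpace ℝ (Fin n)) (s : ℝ) :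
    stdBubble n y ^ s = st7c n ^ s * (1 + ‖y‖ ^ 2) ^ ((-(((n : ℝ) - 2) / 2)) * s) := by
  have hpos : (0:ℝ) < 1 + ‖y‖ ^ 2 := by positivity
  rw [stdBubble, show ((n : ℝ) * ((n : ℝ) - 2)) ^ (((n : ℝ) - 2) / 4) = st7c n from rfl,
    Real.mul_rpow (st7c_pos n hn).le (Real.rpow_nonneg hpos.le _),
    ← Real.rpow_mul hpos.le]

theorem st7_f2_eq (n : ℕ) (hn : 3 ≤ n) (y : EuclideanSpace ℝ (Fin n)) :
    stdBubble n y ^ (((n : ℝ) + 2) / ((n : ℝ) - 2)) =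
      st7a n * (1 + ‖y‖ ^ 2) ^ (-((n : ℝ) + 2) / 2) := by
  have hn3 : (3:ℝ) ≤ (n:ℝ) := by exact_mod_cast hn
  have hne : (n:ℝ) - 2 ≠ 0 := by nlinarith
  rw [st7_pow_eq n hn y, st7a]
  congr 1
  congr 1
  field_simp

theorem st7_f1_eq (n : ℕ) (hn : 3 ≤ n) (y : EuclideanSpace ℝ (Fin n)) :
    (((n : ℝ) + 2) / ((n : ℝ) - 2)) *
        stdBubble n y ^ ((((n : ℝ) + 2) / ((n : ℝ) - 2)) - 1) * kerZlast n y =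
      (((n : ℝ) + 2) / ((n : ℝ) - 2)) * (((n : ℝ) - 2) / 2) * st7a n *
        (1 - ‖y‖ ^ 2) * (1 + ‖y‖ ^ 2) ^ (-((n : ℝ) + 4) / 2) := by
  have hn3 : (3:ℝ) ≤ (n:ℝ) := by exact_mod_cast hn
  have hne : (n:ℝ) - 2 ≠ 0 := by nlinarith
  have hpos : (0:ℝ) < 1 + ‖y‖ ^ 2 := by positivity
  rw [st7_pow_eq n hn y, st7_kerZlast_eq n y]
  have hc : st7c n ^ ((((n : ℝ) + 2) / ((n : ℝ) - 2)) - 1) * st7c n = st7a n := by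
    rw [st7a, ← Real.rpow_add_one (st7c_pos n hn).ne']
    ring_nf
  have hB : (1 + ‖y‖ ^ 2) ^ ((-(((n : ℝ) - 2) / 2)) * ((((n : ℝ) + 2) / ((n : ℝ) - 2)) - 1)) *
      (1 + ‖y‖ ^ 2) ^ (-(n : ℝ) / 2) = (1 + ‖y‖ ^ 2) ^ (-((n : ℝ) + 4) / 2) := by
    rw [← Real.rpow_add hpos]
    congr 1
    field_simp
    ring
  calc (((n : ℝ) + 2) / ((n : ℝ) - 2)) *
        (st7c n ^ ((((n : ℝ) + 2) / ((n : ℝ) - 2)) - 1) *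
          (1 + ‖y‖ ^ 2) ^ ((-(((n : ℝ) - 2) / 2)) * ((((n : ℝ) + 2) / ((n : ℝ) - 2)) - 1))) *
        (st7c n * (((n : ℝ) - 2) / 2) * (1 - ‖y‖ ^ 2) * (1 + ‖y‖ ^ 2) ^ (-(n : ℝ) / 2))
      = (((n : ℝ) + 2) / ((n : ℝ) - 2)) * (((n : ℝ) - 2) / 2) *
          (st7c n ^ ((((n : ℝ) + 2) / ((n : ℝ) - 2)) - 1) * st7c n) * (1 - ‖y‖ ^ 2) *
          ((1 + ‖y‖ ^ 2) ^ ((-(((n : ℝ) - 2) / 2)) * ((((n : ℝ) + 2) / ((n : ℝ) - 2)) - 1)) *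
            (1 + ‖y‖ ^ 2) ^ (-(n : ℝ) / 2)) := by ring
    _ = _ := by rw [hc, hB]

theorem st7_sum_eq (n : ℕ) (hn : 3 ≤ n) (y : EuclideanSpace ℝ (Fin n)) :
    (((n : ℝ) + 2) / ((n : ℝ) - 2)) *
        stdBubble n y ^ ((((n : ℝ) + 2) / ((n : ℝ) - 2)) - 1) * kerZlast n y +
      (((n : ℝ) - 2) / 2) * stdBubble n y ^ (((n : ℝ) + 2) / ((n : ℝ) - 2)) =
      st7H n ‖y‖ := by
  have hn3 : (3:ℝ) ≤ (n:ℝ) := by exact_mod_cast hn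
  have hne : (n:ℝ) - 2 ≠ 0 := by nlinarith
  have hpos : (0:ℝ) < 1 + ‖y‖ ^ 2 := by positivity
  rw [st7_f1_eq n hn y, st7_f2_eq n hn y, st7H]
  have hB : (1 + ‖y‖ ^ 2) ^ (-((n : ℝ) + 2) / 2) =
      (1 + ‖y‖ ^ 2) * (1 + ‖y‖ ^ 2) ^ (-((n : ℝ) + 4) / 2) := by
    rw [show (-((n : ℝ) + 2) / 2) = 1 + (-((n : ℝ) + 4) / 2) by ring,
      Real.rpow_add hpos, Real.rpow_one]
  rw [hB]
  field_simp
  ring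

theorem st7_int_rpow (n : ℕ) (hn : 3 ≤ n) (s : ℝ) (hs : (n:ℝ) < s) :
    Integrable (fun y : EuclideanSpace ℝ (Fin n) => (1 + ‖y‖ ^ 2) ^ (-s / 2)) := by
  have h := integrable_rpow_neg_one_add_norm_sq
    (E := EuclideanSpace ℝ (Fin n)) (μ := volume) (r := s) (by
      rwa [finrank_euclideanSpace_fin])
  exact h

theorem st7_hasDeriv (n : ℕ) (hn : 3 ≤ n) (r : ℝ) :
    HasDerivAt (st7F n) (r ^ (n - 1) * st7H n r) r := by
  have hpos : (0:ℝ) < 1 + r ^ 2 := by positivity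
  have h1 : HasDerivAt (fun r : ℝ => (1:ℝ) + r ^ 2) (2 * r) r := by
    simpa using (hasDerivAt_pow 2 r).const_add (1:ℝ)
  have h2 : HasDerivAt (fun t : ℝ => t ^ (-((n : ℝ) + 2) / 2))
      ((-((n : ℝ) + 2) / 2) * (1 + r ^ 2) ^ (-((n : ℝ) + 2) / 2 - 1)) (1 + r ^ 2) :=
    Real.hasDerivAt_rpow_const (Or.inl hpos.ne')
  have h3 := ((hasDerivAt_pow n r).mul (h2.comp r h1)).const_mul (st7a n)
  refine h3.congr_deriv ?_
  symm
  rw [st7H]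
  have e1 : (-((n : ℝ) + 2) / 2 - 1) = -((n : ℝ) + 4) / 2 := by ring
  have e2 : (1 + r ^ 2) ^ (-((n : ℝ) + 2) / 2) =
      (1 + r ^ 2) * (1 + r ^ 2) ^ (-((n : ℝ) + 4) / 2) := by
    rw [show (-((n : ℝ) + 2) / 2) = 1 + (-((n : ℝ) + 4) / 2) by ring,
      Real.rpow_add hpos, Real.rpow_one]
  have e3 : r ^ n = r ^ (n - 1) * r := by
    conv_lhs => rw [show n = (n - 1) + 1 by omega]
    rw [pow_succ]
  rw [Function.comp_def, e1]
  beta_reduce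
  rw [e2, e3]
  ring

theorem st7_tendsto (n : ℕ) (hn : 3 ≤ n) :
    Filter.Tendsto (st7F n) Filter.atTop (nhds 0) := by
  have ha := st7a_pos n hn
  have hbound : ∀ r : ℝ, 0 ≤ r → st7F n r ≤ st7a n * (1 + r ^ 2)⁻¹ := by
    intro r hr
    have hpos : (0:ℝ) < 1 + r ^ 2 := by positivity
    have h1 : (r : ℝ) ^ n ≤ (1 + r ^ 2) ^ ((n : ℝ) / 2) := by
      have : (r : ℝ) ^ n = (r ^ 2) ^ ((n : ℝ) / 2) := by
        rw [← Real.rpow_natCast r 2, ← Real.rpow_mul hr,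
          show (2 : ℕ) * ((n:ℝ)/2) = ((2:ℝ)) * ((n:ℝ)/2) by norm_num,
          show (2:ℝ) * ((n:ℝ)/2) = (n:ℝ) by ring, Real.rpow_natCast]
      rw [this]
      exact Real.rpow_le_rpow (sq_nonneg r) (by linarith) (by positivity)
    have h2 : (1 + r ^ 2) ^ ((n : ℝ) / 2) * (1 + r ^ 2) ^ (-((n : ℝ) + 2) / 2) =
        (1 + r ^ 2)⁻¹ := by
      rw [← Real.rpow_add hpos, show (n:ℝ)/2 + (-((n : ℝ) + 2) / 2) = -1 by ring,
        Real.rpow_neg_one]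
    rw [st7F]
    calc st7a n * (r ^ n * (1 + r ^ 2) ^ (-((n : ℝ) + 2) / 2))
        ≤ st7a n * ((1 + r ^ 2) ^ ((n : ℝ) / 2) * (1 + r ^ 2) ^ (-((n : ℝ) + 2) / 2)) := by
          apply mul_le_mul_of_nonneg_left _ ha.le
          exact mul_le_mul_of_nonneg_right h1 (Real.rpow_nonneg hpos.le _)
      _ = st7a n * (1 + r ^ 2)⁻¹ := by rw [h2]
  have hlim : Filter.Tendsto (fun r : ℝ => st7a n * (1 + r ^ 2)⁻¹)
      Filter.atTop (nhds 0) := by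
    have : Filter.Tendsto (fun r : ℝ => (1 + r ^ 2)) Filter.atTop Filter.atTop := by
      apply Filter.tendsto_atTop_add_const_left
      exact (tendsto_pow_atTop (by norm_num)).comp Filter.tendsto_id
    simpa using (this.inv_tendsto_atTop).const_mul (st7a n)
  apply tendsto_of_tendsto_of_tendsto_of_le_of_le' tendsto_const_nhds hlim
  · filter_upwards [Filter.eventually_ge_atTop (0:ℝ)] with r hr
    have hpos : (0:ℝ) < 1 + r ^ 2 := by positivity
    rw [st7F]
    positivity
  · filter_upwards [Filter.eventually_ge_atTop (0:ℝ)] with r hr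
    exact hbound r hr

theorem st7_intOn (n : ℕ) (hn : 3 ≤ n) :
    IntegrableOn (fun r : ℝ => r ^ (n - 1) * st7H n r) (Ioi 0) := by
  have hn3 : (3:ℝ) ≤ (n:ℝ) := by exact_mod_cast hn
  have ha := st7a_pos n hn
  have hint : Integrable (fun x : ℝ => st7a n * ((n:ℝ)+2) * (1 + x ^ 2) ^ (-(3:ℝ) / 2)) := by
    have h := integrable_rpow_neg_one_add_norm_sq (E := ℝ) (μ := volume) (r := 3)
      (by norm_num [Module.finrank_self])
    exact (by simpa [Real.norm_eq_abs, sq_abs] using h :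
      Integrable (fun x : ℝ => (1 + x ^ 2) ^ (-(3:ℝ) / 2))).const_mul _
  have hcont : Continuous (fun r : ℝ => r ^ (n - 1) * st7H n r) := by
    apply (continuous_pow _).mul
    unfold st7H
    exact (continuous_const.mul
        (continuous_const.sub (continuous_const.mul (continuous_pow 2)))).mul
      ((continuous_const.add (continuous_pow 2)).rpow_const
        (fun x => Or.inl (by simp only [Pi.add_apply]; positivity)))
  refine (hint.integrableOn).mono' hcont.aestronglyMeasurable.restrict ?_
  filter_upwards [ae_restrict_mem measurableSet_Ioi] with r hr
  have hr0 : (0:ℝ) < r := hr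
  have hpos : (0:ℝ) < 1 + r ^ 2 := by positivity
  have h1 : r ^ (n - 1) ≤ (1 + r ^ 2) ^ (((n:ℝ) - 1) / 2) := by
    have e : (r ^ 2) ^ (((n:ℝ) - 1) / 2) = r ^ (n - 1) := by
      rw [← Real.rpow_natCast r 2, ← Real.rpow_mul hr0.le, ← Real.rpow_natCast r (n - 1)]
      congr 1
      push_cast [Nat.cast_sub (show 1 ≤ n by omega)]
      ring
    rw [← e]
    exact Real.rpow_le_rpow (sq_nonneg r) (by linarith) (by nlinarith)
  have h2 : |(n:ℝ) - 2 * r ^ 2| ≤ ((n:ℝ) + 2) * (1 + r ^ 2) := by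
    rw [abs_le]
    constructor <;> nlinarith [sq_nonneg r]
  have e4 : (1 + r ^ 2) ^ (((n:ℝ) - 1) / 2) *
      ((1 + r ^ 2) ^ (1:ℝ) * (1 + r ^ 2) ^ (-((n:ℝ) + 4) / 2)) =
      (1 + r ^ 2) ^ (-(3:ℝ) / 2) := by
    rw [← Real.rpow_add hpos, ← Real.rpow_add hpos]
    congr 1
    ring
  have habs : ‖r ^ (n - 1) * st7H n r‖ =
      r ^ (n - 1) * (st7a n * |(n:ℝ) - 2 * r ^ 2| *
        (1 + r ^ 2) ^ (-((n:ℝ) + 4) / 2)) := by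
    rw [Real.norm_eq_abs, st7H, abs_mul, abs_mul, abs_mul,
      abs_of_nonneg (pow_nonneg hr0.le _), abs_of_nonneg ha.le,
      abs_of_nonneg (Real.rpow_nonneg hpos.le _)]
  rw [habs]
  calc r ^ (n - 1) * (st7a n * |(n:ℝ) - 2 * r ^ 2| * (1 + r ^ 2) ^ (-((n:ℝ) + 4) / 2))
      ≤ (1 + r ^ 2) ^ (((n:ℝ) - 1) / 2) *
        (st7a n * (((n:ℝ) + 2) * (1 + r ^ 2)) * (1 + r ^ 2) ^ (-((n:ℝ) + 4) / 2)) := by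
        exact mul_le_mul h1 (mul_le_mul_of_nonneg_right
          (mul_le_mul_of_nonneg_left h2 ha.le) (Real.rpow_nonneg hpos.le _))
          (mul_nonneg (mul_nonneg ha.le (abs_nonneg _)) (Real.rpow_nonneg hpos.le _))
          (Real.rpow_nonneg hpos.le _)
    _ = st7a n * ((n:ℝ) + 2) * ((1 + r ^ 2) ^ (((n:ℝ) - 1) / 2) *
        ((1 + r ^ 2) ^ (1:ℝ) * (1 + r ^ 2) ^ (-((n:ℝ) + 4) / 2))) := by
        rw [Real.rpow_one]; ring
    _ = st7a n * ((n:ℝ) + 2) * (1 + r ^ 2) ^ (-(3:ℝ) / 2) := by rw [e4]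

theorem st7_radial_zero (n : ℕ) (hn : 3 ≤ n) :
    ∫ r in Ioi (0:ℝ), r ^ (n - 1) * st7H n r = 0 := by
  have h := integral_Ioi_of_hasDerivAt_of_tendsto'
    (fun x _ => st7_hasDeriv n hn x) (st7_intOn n hn) (st7_tendsto n hn)
  rw [h, st7F, zero_pow (show n ≠ 0 by omega)]
  simp

/-- for `n ≥ 3`, `p = (n+2)/(n-2)`,
`∫ p U^{p-1} Z_{n+1} = -((n-2)/2) ∫ U^p`, both integrals being finite. -/
theorem statement7 (n : ℕ) (hn : 3 ≤ n) :
    Integrable (fun y : EuclideanSpace ℝ (Fin n) =>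
      (((n : ℝ) + 2) / ((n : ℝ) - 2)) *
        stdBubble n y ^ ((((n : ℝ) + 2) / ((n : ℝ) - 2)) - 1) * kerZlast n y) ∧
    Integrable (fun y : EuclideanSpace ℝ (Fin n) =>
      stdBubble n y ^ (((n : ℝ) + 2) / ((n : ℝ) - 2))) ∧
    ∫ y : EuclideanSpace ℝ (Fin n),
        (((n : ℝ) + 2) / ((n : ℝ) - 2)) *
          stdBubble n y ^ ((((n : ℝ) + 2) / ((n : ℝ) - 2)) - 1) * kerZlast n y
      = -(((n : ℝ) - 2) / 2) *
          ∫ y : EuclideanSpace ℝ (Fin n), stdBubble n y ^ (((n : ℝ) + 2) / ((n : ℝ) - 2)) := by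
  have hn3 : (3:ℝ) ≤ (n:ℝ) := by exact_mod_cast hn
  have ha := st7a_pos n hn
  have hintc : Integrable (fun y : EuclideanSpace ℝ (Fin n) =>
      (1 + ‖y‖ ^ 2) ^ (-((n:ℝ) + 2) / 2)) := st7_int_rpow n hn ((n:ℝ) + 2) (by linarith)
  -- integrability of U^p
  have hf2 : Integrable (fun y : EuclideanSpace ℝ (Fin n) =>
      stdBubble n y ^ (((n : ℝ) + 2) / ((n : ℝ) - 2))) := by
    simp only [st7_f2_eq n hn]
    exact hintc.const_mul _
  -- integrability of p U^{p-1} Z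
  have hf1 : Integrable (fun y : EuclideanSpace ℝ (Fin n) =>
      (((n : ℝ) + 2) / ((n : ℝ) - 2)) *
        stdBubble n y ^ ((((n : ℝ) + 2) / ((n : ℝ) - 2)) - 1) * kerZlast n y) := by
    simp only [st7_f1_eq n hn]
    set K : ℝ := (((n : ℝ) + 2) / ((n : ℝ) - 2)) * (((n : ℝ) - 2) / 2) * st7a n with hK
    have hK0 : 0 ≤ K := by
      rw [hK]
      have h1 : (0:ℝ) < ((n : ℝ) + 2) / ((n : ℝ) - 2) := by
        apply div_pos <;> linarith
      have h2 : (0:ℝ) < ((n : ℝ) - 2) / 2 := by linarith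
      exact (mul_pos (mul_pos h1 h2) ha).le
    refine (hintc.const_mul K).mono' ?_ ?_
    · apply Continuous.aestronglyMeasurable
      exact (continuous_const.mul
          (continuous_const.sub ((continuous_norm).pow 2))).mul
        ((continuous_const.add ((continuous_norm).pow 2)).rpow_const
          (fun x => Or.inl (by show (1:ℝ) + ‖x‖ ^ 2 ≠ 0; positivity)))
    · refine Filter.Eventually.of_forall fun y => ?_
      have hpos : (0:ℝ) < 1 + ‖y‖ ^ 2 := by positivity
      have hB : (1 + ‖y‖ ^ 2) ^ (-((n : ℝ) + 2) / 2) =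
          (1 + ‖y‖ ^ 2) * (1 + ‖y‖ ^ 2) ^ (-((n : ℝ) + 4) / 2) := by
        rw [show (-((n : ℝ) + 2) / 2) = 1 + (-((n : ℝ) + 4) / 2) by ring,
          Real.rpow_add hpos, Real.rpow_one]
      rw [Real.norm_eq_abs, abs_mul, abs_mul, abs_of_nonneg hK0,
        abs_of_nonneg (Real.rpow_nonneg hpos.le _), hB]
      have h1 : |1 - ‖y‖ ^ 2| ≤ 1 + ‖y‖ ^ 2 := by
        rw [abs_le]; constructor <;> nlinarith [sq_nonneg ‖y‖]
      calc K * |1 - ‖y‖ ^ 2| * (1 + ‖y‖ ^ 2) ^ (-((n : ℝ) + 4) / 2)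
          ≤ K * (1 + ‖y‖ ^ 2) * (1 + ‖y‖ ^ 2) ^ (-((n : ℝ) + 4) / 2) := by
            apply mul_le_mul_of_nonneg_right _ (Real.rpow_nonneg hpos.le _)
            exact mul_le_mul_of_nonneg_left h1 hK0
        _ = K * ((1 + ‖y‖ ^ 2) * (1 + ‖y‖ ^ 2) ^ (-((n : ℝ) + 4) / 2)) := by ring
  refine ⟨hf1, hf2, ?_⟩
  -- the integral identity
  haveI : Nontrivial (EuclideanSpace ℝ (Fin n)) :=
    Module.nontrivial_of_finrank_pos (R := ℝ)
      (by rw [finrank_euclideanSpace_fin]; omega)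
  have hsum : (fun y : EuclideanSpace ℝ (Fin n) =>
      (((n : ℝ) + 2) / ((n : ℝ) - 2)) *
          stdBubble n y ^ ((((n : ℝ) + 2) / ((n : ℝ) - 2)) - 1) * kerZlast n y +
        (((n : ℝ) - 2) / 2) * stdBubble n y ^ (((n : ℝ) + 2) / ((n : ℝ) - 2))) =
      fun y => st7H n ‖y‖ := funext fun y => st7_sum_eq n hn y
  have hint0 : ∫ y : EuclideanSpace ℝ (Fin n), st7H n ‖y‖ = 0 := by
    rw [MeasureTheory.integral_fun_norm_addHaar volume (st7H n)]
    have hrad : ∫ r in Ioi (0:ℝ),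
        r ^ (Module.finrank ℝ (EuclideanSpace ℝ (Fin n)) - 1) • st7H n r = 0 := by
      simp only [finrank_euclideanSpace_fin, smul_eq_mul]
      exact st7_radial_zero n hn
    rw [hrad, smul_zero, smul_zero]
  have hadd : ∫ y : EuclideanSpace ℝ (Fin n),
      ((((n : ℝ) + 2) / ((n : ℝ) - 2)) *
          stdBubble n y ^ ((((n : ℝ) + 2) / ((n : ℝ) - 2)) - 1) * kerZlast n y +
        (((n : ℝ) - 2) / 2) * stdBubble n y ^ (((n : ℝ) + 2) / ((n : ℝ) - 2))) =
      (∫ y : EuclideanSpace ℝ (Fin n),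
        (((n : ℝ) + 2) / ((n : ℝ) - 2)) *
          stdBubble n y ^ ((((n : ℝ) + 2) / ((n : ℝ) - 2)) - 1) * kerZlast n y) +
      (((n : ℝ) - 2) / 2) *
        ∫ y : EuclideanSpace ℝ (Fin n), stdBubble n y ^ (((n : ℝ) + 2) / ((n : ℝ) - 2)) := by
    rw [integral_add hf1 (hf2.const_mul _), integral_const_mul]
  have hzero : (∫ y : EuclideanSpace ℝ (Fin n),
      (((n : ℝ) + 2) / ((n : ℝ) - 2)) *
        stdBubble n y ^ ((((n : ℝ) + 2) / ((n : ℝ) - 2)) - 1) * kerZlast n y) +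
      (((n : ℝ) - 2) / 2) *
        (∫ y : EuclideanSpace ℝ (Fin n),
          stdBubble n y ^ (((n : ℝ) + 2) / ((n : ℝ) - 2))) = 0 := by
    rw [← hadd, hsum, hint0]
  linear_combination hzero
end
end

section
/- Let λ₀ > 0, T > 0, let μ : [0,T) → (0,∞) be continuous with μ(t) ≥ α(T−t)² for some α > 0, and let q : [0,T) → ℝ be continuous and bounded. Define E(t) = exp(λ₀ ∫_0^ت μ(τ)^{−2} dτ) and p(t) = E(t) ∫_t^T E(s)^{−1} μ(s)^{−2} q(s) ds. Then the integral defining p converges for every t ∈ [0,T), p is differentiable on [0,T), and μ(t)² p'(t) = λ₀ p(t) − q(t) for all t ∈ [0,T). -/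
open Set MeasureTheory Filter Topology

noncomputable section

lemma st12_ftc (T a : ℝ) (F : ℝ → ℝ) (hF : ContinuousOn F (Ico 0 T))
    (ha : a ∈ Ico (0:ℝ) T) (t : ℝ) (ht : t ∈ Ico (0:ℝ) T) :
    HasDerivWithinAt (fun r => ∫ x in a..r, F x) (F t) (Ico 0 T) t := by
  have hmeas : AEStronglyMeasurable F (volume.restrict (Ico (0:ℝ) T)) :=
    hF.aestronglyMeasurable measurableSet_Ico
  have hsub : uIcc a t ⊆ Ico (0:ℝ) T := (ordConnected_Ico.uIcc_subset ha ht)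
  have hint : IntervalIntegrable F volume a t := (hF.mono hsub).intervalIntegrable
  rcases eq_or_lt_of_le ht.1 with h0 | h0
  · subst h0
    have hmem : Ico (0:ℝ) T ∈ 𝓝[Ioi (0:ℝ)] (0:ℝ) :=
      mem_nhdsWithin.mpr ⟨Iio T, isOpen_Iio, ht.2, fun x hx => ⟨le_of_lt hx.2, hx.1⟩⟩
    have h := intervalIntegral.integral_hasDerivWithinAt_right (s := Ici (0:ℝ)) (t := Ioi (0:ℝ))
      hint ⟨Ico (0:ℝ) T, hmem, hmeas⟩
      ((hF 0 ht).mono_of_mem_nhdsWithin hmem)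
    exact h.mono (fun x hx => hx.1)
  · have hmem : Ico (0:ℝ) T ∈ 𝓝 t := Ico_mem_nhds h0 ht.2
    exact (intervalIntegral.integral_hasDerivAt_right hint ⟨Ico (0:ℝ) T, hmem, hmeas⟩
      (hF.continuousAt hmem)).hasDerivWithinAt

/-- the representation of the non-growing solution of the projected equation
`μ² ṗ - λ₀ p = -q`. With `E(t) = exp(λ₀ ∫_0^t μ(τ)^{-2} dτ)` and
`p(t) = E(t) ∫_t^T E(s)^{-1} μ(s)^{-2} q(s) ds`, the integral defining `p` converges for
every `t ∈ [0,T)`, `p` is differentiable on `[0,T)`, and `μ² p' = λ₀ p - q` there. -/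
theorem statement12 (lam0 T α : ℝ) (hlam0 : 0 < lam0) (hT : 0 < T) (hα : 0 < α)
    (μ : ℝ → ℝ) (hμc : ContinuousOn μ (Ico 0 T))
    (hμlow : ∀ t ∈ Ico (0 : ℝ) T, α * (T - t) ^ 2 ≤ μ t)
    (q : ℝ → ℝ) (hqc : ContinuousOn q (Ico 0 T))
    (M : ℝ) (hqb : ∀ t ∈ Ico (0 : ℝ) T, |q t| ≤ M) :
    (∀ t ∈ Ico (0 : ℝ) T,
      IntegrableOn
        (fun s => (Real.exp (lam0 * ∫ τ in (0 : ℝ)..s, (μ τ ^ 2)⁻¹))⁻¹ * (μ s ^ 2)⁻¹ * q s)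
        (Ioc t T)) ∧
    ∀ t ∈ Ico (0 : ℝ) T,
      HasDerivWithinAt
        (fun r => Real.exp (lam0 * ∫ τ in (0 : ℝ)..r, (μ τ ^ 2)⁻¹) *
          ∫ s in Ioc r T,
            (Real.exp (lam0 * ∫ τ in (0 : ℝ)..s, (μ τ ^ 2)⁻¹))⁻¹ * (μ s ^ 2)⁻¹ * q s)
        ((lam0 *
            (Real.exp (lam0 * ∫ τ in (0 : ℝ)..t, (μ τ ^ 2)⁻¹) *
              ∫ s in Ioc t T,
                (Real.exp (lam0 * ∫ τ in (0 : ℝ)..s, (μ τ ^ 2)⁻¹))⁻¹ * (μ s ^ 2)⁻¹ * q s) -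
            q t) / μ t ^ 2)
        (Ico 0 T) t := by
  -- basic positivity
  have h0T : (0:ℝ) ∈ Ico (0:ℝ) T := ⟨le_refl 0, hT⟩
  have hμpos : ∀ s ∈ Ico (0:ℝ) T, 0 < μ s := fun s hs =>
    lt_of_lt_of_le (mul_pos hα (pow_pos (sub_pos.2 hs.2) 2)) (hμlow s hs)
  have hμ2pos : ∀ s ∈ Ico (0:ℝ) T, 0 < μ s ^ 2 := fun s hs => pow_pos (hμpos s hs) 2
  have hhc : ContinuousOn (fun s => (μ s ^ 2)⁻¹) (Ico 0 T) :=
    (hμc.pow 2).inv₀ (fun s hs => (hμ2pos s hs).ne')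
  -- the primitive A and exponential E
  have hAd : ∀ t ∈ Ico (0:ℝ) T,
      HasDerivWithinAt (fun r => ∫ τ in (0:ℝ)..r, (μ τ ^ 2)⁻¹) ((μ t ^ 2)⁻¹) (Ico 0 T) t :=
    fun t ht => st12_ftc T 0 _ hhc h0T t ht
  have hAc : ContinuousOn (fun r => ∫ τ in (0:ℝ)..r, (μ τ ^ 2)⁻¹) (Ico 0 T) :=
    fun t ht => (hAd t ht).continuousWithinAt
  have hEd : ∀ t ∈ Ico (0:ℝ) T,
      HasDerivWithinAt (fun r => Real.exp (lam0 * ∫ τ in (0:ℝ)..r, (μ τ ^ 2)⁻¹))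
        (Real.exp (lam0 * ∫ τ in (0:ℝ)..t, (μ τ ^ 2)⁻¹) * (lam0 * (μ t ^ 2)⁻¹))
        (Ico 0 T) t :=
    fun t ht => ((hAd t ht).const_mul lam0).exp
  have hEc : ContinuousOn (fun r => Real.exp (lam0 * ∫ τ in (0:ℝ)..r, (μ τ ^ 2)⁻¹)) (Ico 0 T) :=
    Real.continuous_exp.comp_continuousOn (continuousOn_const.mul hAc)
  have hEpos : ∀ r : ℝ, 0 < Real.exp (lam0 * ∫ τ in (0:ℝ)..r, (μ τ ^ 2)⁻¹) :=
    fun r => Real.exp_pos _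
  -- continuity of f
  have hfc : ContinuousOn
      (fun s => (Real.exp (lam0 * ∫ τ in (0:ℝ)..s, (μ τ ^ 2)⁻¹))⁻¹ * (μ s ^ 2)⁻¹ * q s)
      (Ico 0 T) :=
    ((hEc.inv₀ (fun s _ => (hEpos s).ne')).mul hhc).mul hqc
  -- derivative of -E⁻¹ at interior points
  have hGd : ∀ x ∈ Ioo (0:ℝ) T,
      HasDerivAt (fun r => -(Real.exp (lam0 * ∫ τ in (0:ℝ)..r, (μ τ ^ 2)⁻¹))⁻¹)
        (lam0 * ((μ x ^ 2)⁻¹ * (Real.exp (lam0 * ∫ τ in (0:ℝ)..x, (μ τ ^ 2)⁻¹))⁻¹)) x := by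
    intro x hx
    have hx' : x ∈ Ico (0:ℝ) T := ⟨hx.1.le, hx.2⟩
    have hmem : Ico (0:ℝ) T ∈ 𝓝 x := Ico_mem_nhds hx.1 hx.2
    have hE : HasDerivAt (fun r => Real.exp (lam0 * ∫ τ in (0:ℝ)..r, (μ τ ^ 2)⁻¹))
        (Real.exp (lam0 * ∫ τ in (0:ℝ)..x, (μ τ ^ 2)⁻¹) * (lam0 * (μ x ^ 2)⁻¹)) x :=
      (hEd x hx').hasDerivAt hmem
    have h := (hE.inv (hEpos x).ne').neg
    have heq : -(-(Real.exp (lam0 * ∫ τ in (0:ℝ)..x, (μ τ ^ 2)⁻¹) * (lam0 * (μ x ^ 2)⁻¹)) /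
        Real.exp (lam0 * ∫ τ in (0:ℝ)..x, (μ τ ^ 2)⁻¹) ^ 2) =
        lam0 * ((μ x ^ 2)⁻¹ * (Real.exp (lam0 * ∫ τ in (0:ℝ)..x, (μ τ ^ 2)⁻¹))⁻¹) := by
      have h1 : Real.exp (lam0 * ∫ τ in (0:ℝ)..x, (μ τ ^ 2)⁻¹) ≠ 0 := (hEpos x).ne'
      have h2 : μ x ^ 2 ≠ 0 := (hμ2pos x hx').ne'
      field_simp
    rw [heq] at h
    exact h
  -- integral identity for the weight over [a,b] ⊆ [0,T)
  have hW : ∀ a b : ℝ, a ∈ Ico (0:ℝ) T → b ∈ Ico (0:ℝ) T → a ≤ b →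
      (∫ y in a..b, lam0 * ((μ y ^ 2)⁻¹ * (Real.exp (lam0 * ∫ τ in (0:ℝ)..y, (μ τ ^ 2)⁻¹))⁻¹)) =
        (Real.exp (lam0 * ∫ τ in (0:ℝ)..a, (μ τ ^ 2)⁻¹))⁻¹ -
          (Real.exp (lam0 * ∫ τ in (0:ℝ)..b, (μ τ ^ 2)⁻¹))⁻¹ := by
    intro a b ha hb hab
    have hsub : Icc a b ⊆ Ico (0:ℝ) T := fun x hx => ⟨le_trans ha.1 hx.1, lt_of_le_of_lt hx.2 hb.2⟩
    have hcont : ContinuousOn (fun r => -(Real.exp (lam0 * ∫ τ in (0:ℝ)..r, (μ τ ^ 2)⁻¹))⁻¹)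
        (Icc a b) := ((hEc.mono hsub).inv₀ (fun s _ => (hEpos s).ne')).neg
    have hint : IntervalIntegrable
        (fun y => lam0 * ((μ y ^ 2)⁻¹ * (Real.exp (lam0 * ∫ τ in (0:ℝ)..y, (μ τ ^ 2)⁻¹))⁻¹))
        volume a b := by
      apply ContinuousOn.intervalIntegrable
      have : uIcc a b ⊆ Ico (0:ℝ) T := by
        rw [uIcc_of_le hab]; exact hsub
      exact (continuousOn_const.mul ((hhc.mono this).mul
        ((hEc.mono this).inv₀ (fun s _ => (hEpos s).ne'))))
    have := intervalIntegral.integral_eq_sub_of_hasDeriv_right_of_le hab hcont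
      (fun x hx => (hGd x ⟨lt_of_le_of_lt ha.1 hx.1, lt_trans hx.2 hb.2⟩).hasDerivWithinAt) hint
    rw [this]; ring
  -- Part 1: integrability
  have hPart1 : ∀ t ∈ Ico (0 : ℝ) T,
      IntegrableOn
        (fun s => (Real.exp (lam0 * ∫ τ in (0 : ℝ)..s, (μ τ ^ 2)⁻¹))⁻¹ * (μ s ^ 2)⁻¹ * q s)
        (Ioc t T) := by
    intro t ht
    set b : ℕ → ℝ := fun n => T - (T - t) * (1 / ((n : ℝ) + 1)) with hbdef
    have hbmem : ∀ n, t ≤ b n ∧ b n < T := by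
      intro n
      have h1 : (0:ℝ) < 1 / ((n : ℝ) + 1) := by positivity
      have h2 : 1 / ((n : ℝ) + 1) ≤ 1 := by
        rw [div_le_one (by positivity)]; simp
      have hTt : (0:ℝ) < T - t := sub_pos.2 ht.2
      constructor
      · have : (T - t) * (1 / ((n : ℝ) + 1)) ≤ (T - t) * 1 :=
          mul_le_mul_of_nonneg_left h2 hTt.le
        simp only [hbdef]; nlinarith
      · simp only [hbdef]; nlinarith
    have htend : Tendsto b atTop (𝓝 T) := by
      have h := (tendsto_one_div_add_atTop_nhds_zero_nat).const_mul (T - t)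
      have h2 : Tendsto (fun n : ℕ => T - (T - t) * (1 / ((n:ℝ) + 1))) atTop (𝓝 (T - (T - t) * 0)) :=
        tendsto_const_nhds.sub h
      rw [hbdef]
      simpa [one_div] using h2
    have hfi : ∀ n, IntegrableOn
        (fun s => (Real.exp (lam0 * ∫ τ in (0 : ℝ)..s, (μ τ ^ 2)⁻¹))⁻¹ * (μ s ^ 2)⁻¹ * q s)
        (Ioc t (b n)) := by
      intro n
      have hsub : Icc t (b n) ⊆ Ico (0:ℝ) T :=
        fun x hx => ⟨le_trans ht.1 hx.1, lt_of_le_of_lt hx.2 (hbmem n).2⟩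
      exact ((hfc.mono hsub).integrableOn_Icc).mono_set Ioc_subset_Icc_self
    apply integrableOn_Ioc_of_intervalIntegral_norm_bounded_right
      (I := M / lam0 * (Real.exp (lam0 * ∫ τ in (0:ℝ)..t, (μ τ ^ 2)⁻¹))⁻¹) hfi htend
    apply Eventually.of_forall
    intro n
    have hbn : b n ∈ Ico (0:ℝ) T := ⟨le_trans ht.1 (hbmem n).1, (hbmem n).2⟩
    have htb : t ≤ b n := (hbmem n).1
    have hsub : Icc t (b n) ⊆ Ico (0:ℝ) T :=
      fun x hx => ⟨le_trans ht.1 hx.1, lt_of_le_of_lt hx.2 (hbmem n).2⟩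
    have huIcc : uIcc t (b n) ⊆ Ico (0:ℝ) T := by rw [uIcc_of_le htb]; exact hsub
    have hnormint : IntervalIntegrable
        (fun s => ‖(Real.exp (lam0 * ∫ τ in (0 : ℝ)..s, (μ τ ^ 2)⁻¹))⁻¹ * (μ s ^ 2)⁻¹ * q s‖)
        volume t (b n) := ((hfc.mono huIcc).norm).intervalIntegrable
    have hgint : IntervalIntegrable
        (fun y => M / lam0 * (lam0 * ((μ y ^ 2)⁻¹ *
          (Real.exp (lam0 * ∫ τ in (0:ℝ)..y, (μ τ ^ 2)⁻¹))⁻¹)))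
        volume t (b n) := by
      apply ContinuousOn.intervalIntegrable
      exact continuousOn_const.mul (continuousOn_const.mul ((hhc.mono huIcc).mul
        ((hEc.mono huIcc).inv₀ (fun s _ => (hEpos s).ne'))))
    have hptwise : ∀ x ∈ Icc t (b n),
        ‖(Real.exp (lam0 * ∫ τ in (0 : ℝ)..x, (μ τ ^ 2)⁻¹))⁻¹ * (μ x ^ 2)⁻¹ * q x‖ ≤
        M / lam0 * (lam0 * ((μ x ^ 2)⁻¹ *
          (Real.exp (lam0 * ∫ τ in (0:ℝ)..x, (μ τ ^ 2)⁻¹))⁻¹)) := by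
      intro x hx
      have hx' : x ∈ Ico (0:ℝ) T := hsub hx
      have h1 : (0:ℝ) ≤ (Real.exp (lam0 * ∫ τ in (0:ℝ)..x, (μ τ ^ 2)⁻¹))⁻¹ :=
        (inv_pos.2 (hEpos x)).le
      have h2 : (0:ℝ) ≤ (μ x ^ 2)⁻¹ := (inv_pos.2 (hμ2pos x hx')).le
      have hqx := hqb x hx'
      have heq : M / lam0 * (lam0 * ((μ x ^ 2)⁻¹ *
          (Real.exp (lam0 * ∫ τ in (0:ℝ)..x, (μ τ ^ 2)⁻¹))⁻¹)) =
          (Real.exp (lam0 * ∫ τ in (0:ℝ)..x, (μ τ ^ 2)⁻¹))⁻¹ * (μ x ^ 2)⁻¹ * M := by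
        field_simp
      rw [heq, Real.norm_eq_abs, abs_mul, abs_mul, abs_of_nonneg h1, abs_of_nonneg h2]
      exact mul_le_mul_of_nonneg_left hqx (mul_nonneg h1 h2)
    calc (∫ x in Ioc t (b n),
          ‖(Real.exp (lam0 * ∫ τ in (0 : ℝ)..x, (μ τ ^ 2)⁻¹))⁻¹ * (μ x ^ 2)⁻¹ * q x‖)
        = ∫ x in t..(b n),
          ‖(Real.exp (lam0 * ∫ τ in (0 : ℝ)..x, (μ τ ^ 2)⁻¹))⁻¹ * (μ x ^ 2)⁻¹ * q x‖ :=
          (intervalIntegral.integral_of_le htb).symm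
      _ ≤ ∫ y in t..(b n), M / lam0 * (lam0 * ((μ y ^ 2)⁻¹ *
            (Real.exp (lam0 * ∫ τ in (0:ℝ)..y, (μ τ ^ 2)⁻¹))⁻¹)) :=
          intervalIntegral.integral_mono_on htb hnormint hgint hptwise
      _ = M / lam0 * ((Real.exp (lam0 * ∫ τ in (0:ℝ)..t, (μ τ ^ 2)⁻¹))⁻¹ -
            (Real.exp (lam0 * ∫ τ in (0:ℝ)..(b n), (μ τ ^ 2)⁻¹))⁻¹) := by
          rw [intervalIntegral.integral_const_mul, hW t (b n) ht hbn htb]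
      _ ≤ M / lam0 * (Real.exp (lam0 * ∫ τ in (0:ℝ)..t, (μ τ ^ 2)⁻¹))⁻¹ := by
          have hM : 0 ≤ M := le_trans (abs_nonneg _) (hqb t ht)
          have := (inv_pos.2 (hEpos (b n))).le
          have hd : 0 ≤ M / lam0 := div_nonneg hM hlam0.le
          nlinarith
  refine ⟨hPart1, ?_⟩
  -- Part 2: the derivative
  intro t ht
  have hIrep : ∀ r ∈ Ico (0:ℝ) T,
      (∫ s in Ioc r T, (Real.exp (lam0 * ∫ τ in (0:ℝ)..s, (μ τ ^ 2)⁻¹))⁻¹ * (μ s ^ 2)⁻¹ * q s) =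
      (∫ s in Ioc t T, (Real.exp (lam0 * ∫ τ in (0:ℝ)..s, (μ τ ^ 2)⁻¹))⁻¹ * (μ s ^ 2)⁻¹ * q s) -
      ∫ s in t..r, (Real.exp (lam0 * ∫ τ in (0:ℝ)..s, (μ τ ^ 2)⁻¹))⁻¹ * (μ s ^ 2)⁻¹ * q s := by
    intro r hr
    rcases le_total t r with htr | hrt
    · have hsub : Icc t r ⊆ Ico (0:ℝ) T :=
        fun x hx => ⟨le_trans ht.1 hx.1, lt_of_le_of_lt hx.2 hr.2⟩
      have hint1 : IntegrableOn
          (fun s => (Real.exp (lam0 * ∫ τ in (0:ℝ)..s, (μ τ ^ 2)⁻¹))⁻¹ * (μ s ^ 2)⁻¹ * q s)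
          (Ioc t r) := ((hfc.mono hsub).integrableOn_Icc).mono_set Ioc_subset_Icc_self
      have hsplit := setIntegral_union (μ := volume) (Ioc_disjoint_Ioc_of_le le_rfl) measurableSet_Ioc
        hint1 (hPart1 r hr)
        (f := fun s => (Real.exp (lam0 * ∫ τ in (0:ℝ)..s, (μ τ ^ 2)⁻¹))⁻¹ * (μ s ^ 2)⁻¹ * q s)
      rw [Ioc_union_Ioc_eq_Ioc htr (le_of_lt hr.2)] at hsplit
      rw [intervalIntegral.integral_of_le htr]
      linarith
    · have hsub : Icc r t ⊆ Ico (0:ℝ) T :=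
        fun x hx => ⟨le_trans hr.1 hx.1, lt_of_le_of_lt hx.2 ht.2⟩
      have hint1 : IntegrableOn
          (fun s => (Real.exp (lam0 * ∫ τ in (0:ℝ)..s, (μ τ ^ 2)⁻¹))⁻¹ * (μ s ^ 2)⁻¹ * q s)
          (Ioc r t) := ((hfc.mono hsub).integrableOn_Icc).mono_set Ioc_subset_Icc_self
      have hsplit := setIntegral_union (μ := volume) (Ioc_disjoint_Ioc_of_le le_rfl) measurableSet_Ioc
        hint1 (hPart1 t ht)
        (f := fun s => (Real.exp (lam0 * ∫ τ in (0:ℝ)..s, (μ τ ^ 2)⁻¹))⁻¹ * (μ s ^ 2)⁻¹ * q s)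
      rw [Ioc_union_Ioc_eq_Ioc hrt (le_of_lt ht.2)] at hsplit
      rw [intervalIntegral.integral_of_ge hrt]
      linarith
  have hId : HasDerivWithinAt
      (fun r => ∫ s in Ioc r T,
        (Real.exp (lam0 * ∫ τ in (0:ℝ)..s, (μ τ ^ 2)⁻¹))⁻¹ * (μ s ^ 2)⁻¹ * q s)
      (-((Real.exp (lam0 * ∫ τ in (0:ℝ)..t, (μ τ ^ 2)⁻¹))⁻¹ * (μ t ^ 2)⁻¹ * q t))
      (Ico 0 T) t := by
    have hF := (st12_ftc T t _ hfc ht t ht).const_sub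
      (∫ s in Ioc t T, (Real.exp (lam0 * ∫ τ in (0:ℝ)..s, (μ τ ^ 2)⁻¹))⁻¹ * (μ s ^ 2)⁻¹ * q s)
    exact hF.congr (fun r hr => hIrep r hr) (hIrep t ht)
  have hmul := (hEd t ht).mul hId
  refine hmul.congr_deriv ?_
  have hE0 : Real.exp (lam0 * ∫ τ in (0:ℝ)..t, (μ τ ^ 2)⁻¹) ≠ 0 := (hEpos t).ne'
  have hμ2 : μ t ^ 2 ≠ 0 := (hμ2pos t ht).ne'
  linear_combination (-(q t * (μ t ^ 2)⁻¹)) * mul_inv_cancel₀ hE0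
end
end
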